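/- Let {Xⁿ} be a sequence of covers of a set S with X⁰ = {S}, Γ its tile graph, and x ∈ S. Choose tiles Xⁿ ∈ Xⁿ with x ∈ Xⁿ for each n ∈ ℕ₀ (a natural geodesic of x). Then: (1) the sequence {Xⁿ} is a geodesic ray in Γ, i.e., the graph distance satisfies |Xⁿ − X^k| = |n − k|; in particular (Xⁿ · X^k) = min{n,k} → ∞ as n,k → ∞, so {Xⁿ} converges at infinity; (2) if {Yⁿ} is another natural geodesic of the same point x, then (Xⁿ · Yⁿ) ≥ n − 1/2 for all n, so the two sequences are equivalent at infinity. -/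

import Mathlib

open Set

variable {S : Type*}

def TileChain (T : Set (Set S)) (A B : Set S) (k : ℕ) : Prop :=
  ∃ c : ℕ → Set S, c 0 = A ∧ c k = B ∧ (∀ i, i ≤ k → c i ∈ T) ∧
    ∀ i, i < k → (c i ∩ c (i + 1)).Nonempty

def Uw (T : Set (Set S)) (w : ℕ) (A : Set S) : Set S :=
  ⋃₀ {B | B ∈ T ∧ ∃ k, k ≤ w ∧ TileChain T A B k}

noncomputable def prox (X : ℕ → Set (Set S)) (w : ℕ) (x y : S) : ℕ∞ :=
  ⨆ n ∈ {n : ℕ | ∃ A ∈ X n, ∃ B ∈ X n, x ∈ A ∧ y ∈ B ∧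
    (Uw (X n) w A ∩ Uw (X n) w B).Nonempty}, (n : ℕ∞)

noncomputable def proxSet (X : ℕ → Set (Set S)) (w : ℕ) (A B : Set S) : ℕ∞ :=
  ⨅ x ∈ A, ⨅ y ∈ B, prox X w x y

abbrev Tile (X : ℕ → Set (Set S)) : Type _ := {p : ℕ × Set S // p.2 ∈ X p.1}

def tileGraph (X : ℕ → Set (Set S)) : SimpleGraph (Tile X) where
  Adj p q := p ≠ q ∧ (p.1.2 ∩ q.1.2).Nonempty ∧ p.1.1 ≤ q.1.1 + 1 ∧ q.1.1 ≤ p.1.1 + 1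
  symm := by
    constructor
    rintro p q ⟨h1, h2, h3, h4⟩
    refine ⟨h1.symm, ?_, h4, h3⟩
    rwa [Set.inter_comm]
  loopless := by
    constructor
    rintro p ⟨h1, -⟩
    exact h1 rfl

noncomputable def gromovProd (X : ℕ → Set (Set S)) (p q : Tile X) : ℝ :=
  ((p.1.1 : ℝ) + (q.1.1 : ℝ) - ((tileGraph X).dist p q : ℝ)) / 2

-- auxiliary lemmas

lemma tile_walk_length_ge (X : ℕ → Set (Set S)) {p q : Tile X}
    (w : (tileGraph X).Walk p q) : Nat.dist p.1.1 q.1.1 ≤ w.length := by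
  induction w with
  | nil => simp [Nat.dist_self]
  | cons h w ih =>
    rename_i u v r
    have h1 : Nat.dist u.1.1 v.1.1 ≤ 1 := by
      obtain ⟨-, -, h3, h4⟩ := h
      simp [Nat.dist]; omega
    calc Nat.dist u.1.1 r.1.1 ≤ Nat.dist u.1.1 v.1.1 + Nat.dist v.1.1 r.1.1 :=
          Nat.dist.triangle_inequality _ _ _
      _ ≤ 1 + w.length := by omega
      _ = (SimpleGraph.Walk.cons h w).length := by simp [Nat.add_comm]

lemma tile_walk_exists (X : ℕ → Set (Set S)) (x : S) (c : ℕ → Set S)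
    (hc : ∀ n, c n ∈ X n) (hx : ∀ n, x ∈ c n) (n d : ℕ) :
    ∃ w : (tileGraph X).Walk ⟨(n, c n), hc n⟩ ⟨(n + d, c (n + d)), hc (n + d)⟩,
      w.length = d := by
  induction d with
  | zero => exact ⟨SimpleGraph.Walk.nil, rfl⟩
  | succ d ih =>
    obtain ⟨w, hw⟩ := ih
    have hadj : (tileGraph X).Adj ⟨(n + d, c (n + d)), hc (n + d)⟩
        ⟨(n + (d+1), c (n + (d+1))), hc (n + (d+1))⟩ := by
      refine ⟨?_, ⟨x, hx _, hx _⟩, by simp; omega, by simp; omega⟩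
      intro h
      have : n + d = n + (d + 1) := congrArg (fun p => p.1.1) h
      omega
    exact ⟨w.concat hadj, by simp [hw]⟩

lemma tile_dist (X : ℕ → Set (Set S)) (x : S) (c : ℕ → Set S)
    (hc : ∀ n, c n ∈ X n) (hx : ∀ n, x ∈ c n) (n k : ℕ) :
    (tileGraph X).dist ⟨(n, c n), hc n⟩ ⟨(k, c k), hc k⟩ = Nat.dist n k := by
  rcases le_total n k with h | h
  · obtain ⟨d, rfl⟩ := Nat.exists_eq_add_of_le h
    obtain ⟨w, hw⟩ := tile_walk_exists X x c hc hx n d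
    refine le_antisymm ?_ ?_
    · calc (tileGraph X).dist _ _ ≤ w.length := SimpleGraph.dist_le w
        _ = Nat.dist n (n + d) := by simp [hw, Nat.dist]
    · have hr : (tileGraph X).Reachable ⟨(n, c n), hc n⟩ ⟨(n + d, c (n + d)), hc (n + d)⟩ :=
        ⟨w⟩
      obtain ⟨p, hp⟩ := hr.exists_walk_length_eq_dist
      calc Nat.dist n (n + d) ≤ p.length := by
            simpa using tile_walk_length_ge X p
        _ = _ := hp
  · obtain ⟨d, rfl⟩ := Nat.exists_eq_add_of_le h
    rw [SimpleGraph.dist_comm, Nat.dist_comm]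
    obtain ⟨w, hw⟩ := tile_walk_exists X x c hc hx k d
    refine le_antisymm ?_ ?_
    · calc (tileGraph X).dist _ _ ≤ w.length := SimpleGraph.dist_le w
        _ = Nat.dist k (k + d) := by simp [hw, Nat.dist]
    · have hr : (tileGraph X).Reachable ⟨(k, c k), hc k⟩ ⟨(k + d, c (k + d)), hc (k + d)⟩ :=
        ⟨w⟩
      obtain ⟨p, hp⟩ := hr.exists_walk_length_eq_dist
      calc Nat.dist k (k + d) ≤ p.length := by
            simpa using tile_walk_length_ge X p
        _ = _ := hp

/-- Natural geodesics: if `cⁿ ∈ Xⁿ` are tiles all containing a point `x`, then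
(1) they form a geodesic ray in the tile graph (`|Xⁿ − X^k| = |n − k|`), so
`(Xⁿ · X^k) = min{n,k}` and the sequence converges at infinity; (2) for any other
natural geodesic `c'` of the same point `x`, `(Xⁿ · Yⁿ) ≥ n − 1/2` for all `n`, so the
two sequences are equivalent at infinity. -/
theorem stmt15 (S : Type*) (X : ℕ → Set (Set S))
    (hcov : ∀ n, ⋃₀ X n = Set.univ) (hX0 : X 0 = {Set.univ})
    (x : S) (c : ℕ → Set S) (hc : ∀ n, c n ∈ X n) (hx : ∀ n, x ∈ c n) :
    (∀ n k : ℕ,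
      (tileGraph X).dist ⟨(n, c n), hc n⟩ ⟨(k, c k), hc k⟩ = Nat.dist n k) ∧
    (∀ n k : ℕ,
      gromovProd X ⟨(n, c n), hc n⟩ ⟨(k, c k), hc k⟩ = min (n : ℝ) (k : ℝ)) ∧
    (∀ (c' : ℕ → Set S) (hc' : ∀ n, c' n ∈ X n), (∀ n, x ∈ c' n) →
      ∀ n : ℕ, (n : ℝ) - 1 / 2 ≤ gromovProd X ⟨(n, c n), hc n⟩ ⟨(n, c' n), hc' n⟩) := by
  refine ⟨tile_dist X x c hc hx, ?_, ?_⟩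
  · intro n k
    rw [gromovProd, tile_dist X x c hc hx]
    rcases le_total n k with h | h
    · have : Nat.dist n k = k - n := by simp [Nat.dist]; omega
      rw [this]
      have hnk : (n : ℝ) ≤ k := by exact_mod_cast h
      rw [min_eq_left hnk]
      push_cast [Nat.cast_sub h]
      ring
    · have : Nat.dist n k = n - k := by simp [Nat.dist]; omega
      rw [this]
      have hnk : (k : ℝ) ≤ n := by exact_mod_cast h
      rw [min_eq_right hnk]
      push_cast [Nat.cast_sub h]
      ring
  · intro c' hc' hx' n
    have hdle : (tileGraph X).dist ⟨(n, c n), hc n⟩ ⟨(n, c' n), hc' n⟩ ≤ 1 := by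
      by_cases heq : (⟨(n, c n), hc n⟩ : Tile X) = ⟨(n, c' n), hc' n⟩
      · rw [heq, SimpleGraph.dist_self]; omega
      · have hadj : (tileGraph X).Adj ⟨(n, c n), hc n⟩ ⟨(n, c' n), hc' n⟩ :=
          ⟨heq, ⟨x, hx n, hx' n⟩, by simp, by simp⟩
        rw [SimpleGraph.dist_eq_one_iff_adj.mpr hadj]
    rw [gromovProd]
    have : ((tileGraph X).dist ⟨(n, c n), hc n⟩ ⟨(n, c' n), hc' n⟩ : ℝ) ≤ 1 := by
      exact_mod_cast hdle
    simp only
    linarith
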